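/- arXiv:2206.03640 — 2 statements merged into one kernel-verified Lean document; each statement's English description precedes it below -/
import Mathlib

section
/- Let B, k, y, e ∈ ℝ with k ≤ 0, and let x : ℝ → ℝ be differentiable at t with x'(t) = B·y + k·x(t) + k·e. Then the upper right Dini derivative of s ↦ |x(s)| at t satisfies limsup_{h→0⁺} (|x(t+h)| − |x(t)|)/h ≤ |B|·|y| + k·|x(t)| + |k|·|e|. -/
/-- The upper right Dini derivative of `w` at `t`:
`D⁺w(t) = limsup_{h→0⁺} (w(t+h) − w(t))/h`, valued in `EReal`. -/
noncomputable def upperDini (w : ℝ → ℝ) (t : ℝ) : EReal :=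
  Filter.limsup (fun h : ℝ => (((w (t + h) - w t) / h : ℝ) : EReal))
    (nhdsWithin 0 (Set.Ioi 0))

theorem stmt_14 (B k y e t : ℝ) (hk : k ≤ 0) (x : ℝ → ℝ)
    (hx : HasDerivAt x (B * y + k * x t + k * e) t) :
    upperDini (fun s => |x s|) t ≤ ((|B| * |y| + k * |x t| + |k| * |e| : ℝ) : EReal) := by
  set d := B * y + k * x t + k * e with hd
  have hmap : Filter.Tendsto (fun h : ℝ => t + h) (nhdsWithin 0 (Set.Ioi 0))
      (nhdsWithin t {t}ᶜ) := by
    rw [tendsto_nhdsWithin_iff]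
    constructor
    · have h1 : Filter.Tendsto (fun h : ℝ => t + h) (nhds 0) (nhds t) := by
        simpa using (continuous_add_left t).tendsto (0 : ℝ)
      exact h1.mono_left nhdsWithin_le_nhds
    · filter_upwards [self_mem_nhdsWithin] with h hh
      simp only [Set.mem_compl_iff, Set.mem_singleton_iff]
      have h0 : (0:ℝ) < h := hh
      intro hc
      nlinarith [hc]
  have hslope : Filter.Tendsto (fun h : ℝ => (x (t + h) - x t) / h)
      (nhdsWithin 0 (Set.Ioi 0)) (nhds d) := by
    have h2 := (hasDerivAt_iff_tendsto_slope.mp hx).comp hmap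
    refine h2.congr fun h => ?_
    simp [Function.comp, slope_def_field]
  -- the limit L of the difference quotient of |x| and the bound L ≤ RHS
  have key : ∃ L : ℝ, L ≤ |B| * |y| + k * |x t| + |k| * |e| ∧
      Filter.Tendsto (fun h : ℝ => (|x (t + h)| - |x t|) / h)
        (nhdsWithin 0 (Set.Ioi 0)) (nhds L) := by
    rcases lt_trichotomy (x t) 0 with hneg | hzero | hpos
    · refine ⟨-d, ?_, ?_⟩
      · have h1 : -(B * y) ≤ |B| * |y| := by
          rw [← abs_mul]; exact neg_le_abs _
        have h2 : -(k * e) ≤ |k| * |e| := by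
          rw [← abs_mul]; exact neg_le_abs _
        have h3 : -(k * x t) = k * |x t| := by
          rw [abs_of_neg hneg]; ring
        rw [hd]; linarith
      · have hcont : Filter.Tendsto (fun h : ℝ => x (t + h)) (nhdsWithin 0 (Set.Ioi 0))
            (nhds (x t)) :=
          hx.continuousAt.tendsto.comp (hmap.mono_right nhdsWithin_le_nhds)
        have hev : ∀ᶠ h in nhdsWithin (0:ℝ) (Set.Ioi 0), x (t + h) < 0 :=
          hcont.eventually (eventually_lt_nhds hneg)
        refine (hslope.neg.congr' ?_)
        filter_upwards [hev] with h hh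
        rw [abs_of_neg hh, abs_of_neg hneg]
        ring
    · refine ⟨|d|, ?_, ?_⟩
      · have h1 : |d| ≤ |B * y| + |k * e| := by
          rw [hd, hzero]; simpa using abs_add_le (B * y) (k * e)
        rw [hzero, abs_mul, abs_mul] at *
        simp only [abs_zero, mul_zero] at *
        linarith
      · refine (hslope.abs.congr' ?_)
        filter_upwards [self_mem_nhdsWithin] with h hh
        have h0 : (0:ℝ) < h := hh
        simp [hzero, abs_div, abs_of_pos h0]
    · refine ⟨d, ?_, ?_⟩
      · have h1 : B * y ≤ |B| * |y| := by
          rw [← abs_mul]; exact le_abs_self _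
        have h2 : k * e ≤ |k| * |e| := by
          rw [← abs_mul]; exact le_abs_self _
        have h3 : k * x t = k * |x t| := by rw [abs_of_pos hpos]
        rw [hd]; linarith
      · have hcont : Filter.Tendsto (fun h : ℝ => x (t + h)) (nhdsWithin 0 (Set.Ioi 0))
            (nhds (x t)) :=
          hx.continuousAt.tendsto.comp (hmap.mono_right nhdsWithin_le_nhds)
        have hev : ∀ᶠ h in nhdsWithin (0:ℝ) (Set.Ioi 0), 0 < x (t + h) :=
          hcont.eventually (eventually_gt_nhds hpos)
        refine (hslope.congr' ?_)
        filter_upwards [hev] with h hh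
        rw [abs_of_pos hh, abs_of_pos hpos]
  obtain ⟨L, hL, hlim⟩ := key
  have heq : upperDini (fun s => |x s|) t = (L : EReal) := by
    apply Filter.Tendsto.limsup_eq
    exact EReal.tendsto_coe.mpr hlim
  rw [heq]
  exact_mod_cast hL
end

section
/- Let r > 0, B ∈ ℝ, k < 0, p > 0, let q1 = p·|B| and let q2 satisfy q1 < q2 and k + q2/p < 0. Let ε : ℝ → ℝ, and let x : ℝ → ℝ be continuous and differentiable at every t with x'(t) = B·x(t−r) + k·x(t) + k·ε(t). Define v(t) = p·|x(t)| + ∫_{t−r}^{t} |x(s)| · ( ((t−s)/r)·q1 + ((s−t+r)/r)·q2 ) ds. Then for every t the upper right Dini derivative satisfies D⁺v(t) ≤ −μ·v(t) + p·|k|·|ε(t)|, where μ = min{ −(k + q2/p), (q2−q1)/(r·q2) } > 0. -/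
open Filter Set

theorem stmt_15 (r B k p q1 q2 : ℝ) (hr : 0 < r) (hk : k < 0) (hp : 0 < p)
    (hq1 : q1 = p * |B|) (hq12 : q1 < q2) (hstab : k + q2 / p < 0)
    (ε : ℝ → ℝ) (x : ℝ → ℝ) (hx_cont : Continuous x)
    (hx_deriv : ∀ t, HasDerivAt x (B * x (t - r) + k * x t + k * ε t) t)
    (v : ℝ → ℝ)
    (hv : ∀ t, v t = p * |x t| +
      ∫ s in (t - r)..t, |x s| * (((t - s) / r) * q1 + ((s - t + r) / r) * q2)) :
    0 < min (-(k + q2 / p)) ((q2 - q1) / (r * q2)) ∧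
    ∀ t, upperDini v t ≤
      ((-(min (-(k + q2 / p)) ((q2 - q1) / (r * q2))) * v t + p * |k| * |ε t| : ℝ) : EReal) := by
  have hq1nn : 0 ≤ q1 := hq1 ▸ mul_nonneg hp.le (abs_nonneg B)
  have hq2 : 0 < q2 := lt_of_le_of_lt hq1nn hq12
  set μ := min (-(k + q2 / p)) ((q2 - q1) / (r * q2)) with hμdef
  have hμpos : 0 < μ := lt_min (by linarith) (div_pos (by linarith) (mul_pos hr hq2))
  have hμ1 : μ ≤ -(k + q2 / p) := min_le_left _ _
  have hμ2 : μ ≤ (q2 - q1) / (r * q2) := min_le_right _ _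
  refine ⟨hμpos, fun t => ?_⟩
  -- antiderivatives
  set F : ℝ → ℝ := fun u => ∫ s in (0:ℝ)..u, |x s| with hF_def
  set G : ℝ → ℝ := fun u => ∫ s in (0:ℝ)..u, s * |x s| with hG_def
  have hFd : ∀ u, HasDerivAt F (|x u|) u := fun u =>
    (hx_cont.abs.integral_hasStrictDerivAt 0 u).hasDerivAt
  have hGd : ∀ u, HasDerivAt G (u * |x u|) u := fun u =>
    ((continuous_id.mul hx_cont.abs).integral_hasStrictDerivAt 0 u).hasDerivAt
  have hintA : ∀ a b : ℝ, IntervalIntegrable (fun s => |x s|) MeasureTheory.volume a b :=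
    fun a b => (hx_cont.abs).intervalIntegrable a b
  have hintS : ∀ a b : ℝ, IntervalIntegrable (fun s => s * |x s|) MeasureTheory.volume a b :=
    fun a b => (continuous_id.mul hx_cont.abs).intervalIntegrable a b
  have hFsub : ∀ u : ℝ, (∫ s in (u - r)..u, |x s|) = F u - F (u - r) := by
    intro u
    rw [hF_def]
    exact (intervalIntegral.integral_interval_sub_left (hintA 0 u) (hintA 0 (u - r))).symm
  have hGsub : ∀ u : ℝ, (∫ s in (u - r)..u, s * |x s|) = G u - G (u - r) := by
    intro u
    rw [hG_def]
    exact (intervalIntegral.integral_interval_sub_left (hintS 0 u) (hintS 0 (u - r))).symm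
  -- closed form of the integral part
  set W : ℝ → ℝ := fun u =>
    (q1 - q2) / r * (u * (F u - F (u - r)) - (G u - G (u - r))) + q2 * (F u - F (u - r))
    with hW_def
  have hvW : ∀ u, v u = p * |x u| + W u := by
    intro u
    rw [hv u, hW_def]
    have e : ∀ s : ℝ, |x s| * (((u - s) / r) * q1 + ((s - u + r) / r) * q2)
        = ((q1 - q2) / r * u) * |x s| - ((q1 - q2) / r) * (s * |x s|) + q2 * |x s| := by
      intro s; field_simp; ring
    simp only [e]
    rw [intervalIntegral.integral_add (((hintA (u-r) u).const_mul _).sub ((hintS (u-r) u).const_mul _))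
      ((hintA (u-r) u).const_mul _),
      intervalIntegral.integral_sub ((hintA (u-r) u).const_mul _) ((hintS (u-r) u).const_mul _),
      intervalIntegral.integral_const_mul, intervalIntegral.integral_const_mul,
      intervalIntegral.integral_const_mul, hFsub u, hGsub u]
    ring
  -- derivative of W at t
  set I : ℝ := F t - F (t - r) with hI_def
  have hFtr : HasDerivAt (fun u : ℝ => F (u - r)) (|x (t - r)|) t := by
    have := (hFd (t - r)).comp t ((hasDerivAt_id t).sub_const r)
    exact HasDerivAt.comp_sub_const t r (hFd (t - r))
  have hGtr : HasDerivAt (fun u : ℝ => G (u - r)) ((t - r) * |x (t - r)|) t := by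
    have := (hGd (t - r)).comp t ((hasDerivAt_id t).sub_const r)
    exact HasDerivAt.comp_sub_const t r (hGd (t - r))
  have hWd : HasDerivAt W (q2 * |x t| - q1 * |x (t - r)| - (q2 - q1) / r * I) t := by
    have hsub : HasDerivAt (fun u => F u - F (u - r)) (|x t| - |x (t - r)|) t :=
      (hFd t).sub hFtr
    have h1 : HasDerivAt (fun u : ℝ => u * (F u - F (u - r)))
        (1 * (F t - F (t - r)) + t * (|x t| - |x (t - r)|)) t :=
      (hasDerivAt_id t).mul hsub
    have h2 : HasDerivAt (fun u => G u - G (u - r)) (t * |x t| - (t - r) * |x (t - r)|) t :=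
      (hGd t).sub hGtr
    have h3 := ((h1.sub h2).const_mul ((q1 - q2) / r)).add (hsub.const_mul q2)
    convert h3 using 1
    · rfl
    · rfl
    · rfl
    rw [hI_def]
    field_simp
    ring
  -- difference quotient of p|x ·| from the right
  have hxq : Tendsto (fun h => (x (t + h) - x t) / h) (nhdsWithin 0 (Set.Ioi 0))
      (nhds (B * x (t - r) + k * x t + k * ε t)) := by
    have := (hx_deriv t).tendsto_slope_zero_right
    simpa [smul_eq_mul, div_eq_inv_mul] using this
  set e : ℝ := B * x (t - r) + k * x t + k * ε t with he_def
  have habsB : B * x (t - r) ≤ |B| * |x (t - r)| := (le_abs_self _).trans (abs_mul _ _).le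
  have habsB' : -(B * x (t - r)) ≤ |B| * |x (t - r)| := (neg_le_abs _).trans (abs_mul _ _).le
  have habsk : k * ε t ≤ |k| * |ε t| := (le_abs_self _).trans (abs_mul _ _).le
  have habsk' : -(k * ε t) ≤ |k| * |ε t| := (neg_le_abs _).trans (abs_mul _ _).le
  have key : ∃ d : ℝ,
      Tendsto (fun h => (p * |x (t + h)| - p * |x t|) / h) (nhdsWithin 0 (Set.Ioi 0)) (nhds d) ∧
      d ≤ p * |B| * |x (t - r)| + p * k * |x t| + p * |k| * |ε t| := by
    have hc : Tendsto (fun h : ℝ => x (t + h)) (nhdsWithin 0 (Set.Ioi 0)) (nhds (x t)) := by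
      have h1 : Tendsto (fun h : ℝ => t + h) (nhdsWithin 0 (Set.Ioi 0)) (nhds t) := by
        have h0 : Tendsto (fun h : ℝ => t + h) (nhds 0) (nhds (t + 0)) :=
          (continuous_const.add continuous_id).tendsto 0
        simpa using h0.mono_left nhdsWithin_le_nhds
      exact (hx_cont.tendsto t).comp h1
    rcases lt_trichotomy (x t) 0 with hxt | hxt | hxt
    · refine ⟨-(p * e), ?_, ?_⟩
      · have hev : ∀ᶠ h in nhdsWithin (0:ℝ) (Set.Ioi 0), x (t + h) < 0 :=
          hc.eventually (eventually_lt_nhds hxt)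
        have h0 : Tendsto (fun h => (-p) * ((x (t + h) - x t) / h)) (nhdsWithin 0 (Set.Ioi 0))
            (nhds (-(p * e))) := by
          simpa [neg_mul] using hxq.const_mul (-p)
        refine h0.congr' ?_
        filter_upwards [hev] with h hh
        rw [abs_of_neg hh, abs_of_neg hxt]
        ring
      · have h1 : p * (-(B * x (t - r))) ≤ p * (|B| * |x (t - r)|) :=
          mul_le_mul_of_nonneg_left habsB' hp.le
        have h2 : p * (-(k * ε t)) ≤ p * (|k| * |ε t|) :=
          mul_le_mul_of_nonneg_left habsk' hp.le
        rw [abs_of_neg hxt, he_def]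
        nlinarith
    · refine ⟨p * |e|, ?_, ?_⟩
      · have h0 : Tendsto (fun h => p * |(x (t + h) - x t) / h|) (nhdsWithin 0 (Set.Ioi 0))
            (nhds (p * |e|)) := hxq.abs.const_mul p
        refine h0.congr' ?_
        filter_upwards [self_mem_nhdsWithin] with h (hh : 0 < h)
        rw [hxt, abs_div, abs_of_pos hh]
        simp
        ring
      · have h1 : |e| ≤ |B| * |x (t - r)| + |k| * |ε t| := by
          rw [he_def, hxt]
          calc |B * x (t - r) + k * 0 + k * ε t| = |B * x (t - r) + k * ε t| := by ring_nf
            _ ≤ |B * x (t - r)| + |k * ε t| := abs_add_le _ _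
            _ ≤ |B| * |x (t - r)| + |k| * |ε t| := by rw [abs_mul, abs_mul]
        have h2 := mul_le_mul_of_nonneg_left h1 hp.le
        rw [hxt]
        simp only [abs_zero]
        nlinarith
    · refine ⟨p * e, ?_, ?_⟩
      · have hev : ∀ᶠ h in nhdsWithin (0:ℝ) (Set.Ioi 0), 0 < x (t + h) :=
          hc.eventually (eventually_gt_nhds hxt)
        have h0 : Tendsto (fun h => p * ((x (t + h) - x t) / h)) (nhdsWithin 0 (Set.Ioi 0))
            (nhds (p * e)) := hxq.const_mul p
        refine h0.congr' ?_
        filter_upwards [hev] with h hh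
        rw [abs_of_pos hh, abs_of_pos hxt]
        ring
      · have h1 : p * (B * x (t - r)) ≤ p * (|B| * |x (t - r)|) :=
          mul_le_mul_of_nonneg_left habsB hp.le
        have h2 : p * (k * ε t) ≤ p * (|k| * |ε t|) :=
          mul_le_mul_of_nonneg_left habsk hp.le
        rw [abs_of_pos hxt, he_def]
        nlinarith
  obtain ⟨d, hd, hdle⟩ := key
  -- difference quotient of W
  have hWq : Tendsto (fun h => (W (t + h) - W t) / h) (nhdsWithin 0 (Set.Ioi 0))
      (nhds (q2 * |x t| - q1 * |x (t - r)| - (q2 - q1) / r * I)) := by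
    have := hWd.tendsto_slope_zero_right
    simpa [smul_eq_mul, div_eq_inv_mul] using this
  set D : ℝ := q2 * |x t| - q1 * |x (t - r)| - (q2 - q1) / r * I with hD_def
  have hvq : Tendsto (fun h => (v (t + h) - v t) / h) (nhdsWithin 0 (Set.Ioi 0))
      (nhds (d + D)) := by
    refine (hd.add hWq).congr fun h => ?_
    rw [hvW (t + h), hvW t]
    ring
  have hlim : upperDini v t = ((d + D : ℝ) : EReal) := by
    have : Tendsto (fun h => (((v (t + h) - v t) / h : ℝ) : EReal)) (nhdsWithin 0 (Set.Ioi 0))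
        (nhds ((d + D : ℝ) : EReal)) := (continuous_coe_real_ereal.tendsto _).comp hvq
    exact this.limsup_eq
  rw [hlim]
  rw [EReal.coe_le_coe_iff]
  -- final real inequality
  have hI0 : 0 ≤ I := by
    rw [hI_def, ← hFsub t]
    exact intervalIntegral.integral_nonneg (by linarith) fun s _ => abs_nonneg _
  set V2t : ℝ := ∫ s in (t - r)..t, |x s| * (((t - s) / r) * q1 + ((s - t + r) / r) * q2)
    with hV2_def
  have hV2le : V2t ≤ q2 * I := by
    rw [hV2_def, hI_def, ← hFsub t, ← intervalIntegral.integral_const_mul]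
    have hcg : Continuous fun s : ℝ => ((t - s) / r) * q1 + ((s - t + r) / r) * q2 := by
      fun_prop
    refine intervalIntegral.integral_mono_on (by linarith)
      ((hx_cont.abs.mul hcg).intervalIntegrable _ _)
      ((continuous_const.mul hx_cont.abs).intervalIntegrable _ _) fun s hs => ?_
    have hs1 : t - r ≤ s := hs.1
    have hs2 : s ≤ t := hs.2
    have hg : ((t - s) / r) * q1 + ((s - t + r) / r) * q2 ≤ q2 := by
      have hA : ((t - s) / r) * q1 ≤ ((t - s) / r) * q2 :=
        mul_le_mul_of_nonneg_left hq12.le (div_nonneg (by linarith) hr.le)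
      have hB : ((t - s) / r) * q2 + ((s - t + r) / r) * q2 = q2 := by
        field_simp
        ring
      linarith
    have := mul_le_mul_of_nonneg_left hg (abs_nonneg (x s))
    linarith [this]
  have hmul1 : p * k + q2 ≤ -(μ * p) := by
    have h := mul_le_mul_of_nonneg_right hμ1 hp.le
    have : -(k + q2 / p) * p = -(k * p) - q2 := by field_simp; ring
    rw [this] at h
    linarith
  have hmul2 : μ * V2t ≤ (q2 - q1) / r * I := by
    have ha : μ * V2t ≤ μ * (q2 * I) := mul_le_mul_of_nonneg_left hV2le hμpos.le
    have hb : μ * (q2 * I) ≤ ((q2 - q1) / (r * q2)) * (q2 * I) :=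
      mul_le_mul_of_nonneg_right hμ2 (mul_nonneg hq2.le hI0)
    have hc : ((q2 - q1) / (r * q2)) * (q2 * I) = (q2 - q1) / r * I := by
      field_simp
    exact ha.trans (hb.trans_eq hc)
  have hvt : v t = p * |x t| + V2t := by rw [hv t, hV2_def]
  rw [hvt, hD_def]
  have hxabs : 0 ≤ |x t| := abs_nonneg (x t)
  have hx1 := mul_le_mul_of_nonneg_right hmul1 hxabs
  have hq1' : q1 * |x (t - r)| = p * |B| * |x (t - r)| := by rw [hq1]
  linarith [hx1, hmul2, hdle, hq1']
end
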